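/- Suppose 𝒳 is closed and 𝒰 is compact. Then the set 𝒮_∞ := ⋂_{k≥0} 𝒮_k is robust control invariant: for every x ∈ 𝒮_∞ there exists u ∈ 𝒰 such that A x + B u + w ∈ 𝒮_∞ for all w ∈ 𝒲. -/

import Mathlib

open Matrix Set Filter Topology

/-- if `𝒳` is closed and `𝒰` is compact, then `𝒮_∞ := ⋂ₖ 𝒮ₖ` is
robust control invariant: for every `x ∈ 𝒮_∞` there exists `u ∈ 𝒰` such that
`A x + B u + w ∈ 𝒮_∞` for all `w ∈ 𝒲`. -/
theorem intersection_robust_control_invariant {n p : ℕ}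
    (A : Matrix (Fin n) (Fin n) ℝ) (B : Matrix (Fin n) (Fin p) ℝ)
    (𝒳 : Set (Fin n → ℝ)) (𝒰 : Set (Fin p → ℝ)) (𝒲 : Set (Fin n → ℝ))
    (h𝒳 : IsClosed 𝒳) (h𝒰 : IsCompact 𝒰)
    (S : ℕ → Set (Fin n → ℝ))
    (hS0 : S 0 = 𝒳)
    (hSk : ∀ k, S (k + 1) =
      S k ∩ {x : Fin n → ℝ | ∃ u ∈ 𝒰, ∀ w ∈ 𝒲, A.mulVec x + B.mulVec u + w ∈ S k}) :
    ∀ x ∈ ⋂ k, S k, ∃ u ∈ 𝒰, ∀ w ∈ 𝒲, A.mulVec x + B.mulVec u + w ∈ ⋂ k, S k := by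
  intro x hx
  simp only [mem_iInter] at hx
  have hmono : ∀ k, S (k + 1) ⊆ S k := fun k => by rw [hSk]; exact inter_subset_left
  have cA : Continuous fun v : Fin n → ℝ => A.mulVec v := by
    have := LinearMap.continuous_of_finiteDimensional (Matrix.mulVecLin A)
    simpa [Matrix.coe_mulVecLin] using this
  have cB : Continuous fun v : Fin p → ℝ => B.mulVec v := by
    have := LinearMap.continuous_of_finiteDimensional (Matrix.mulVecLin B)
    simpa [Matrix.coe_mulVecLin] using this
  -- each S k is closed
  have hclosed : ∀ k, IsClosed (S k) := by
    intro k
    induction k with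
    | zero => rw [hS0]; exact h𝒳
    | succ k ih =>
      rw [hSk]
      refine ih.inter ?_
      apply IsSeqClosed.isClosed
      intro xs y hxs hy
      simp only [mem_setOf_eq] at hxs ⊢
      choose u hu h2 using hxs
      obtain ⟨v, hv, φ, hφ, htend⟩ := h𝒰.tendsto_subseq hu
      refine ⟨v, hv, fun w hw => ?_⟩
      have tendtot : Tendsto (fun m => A.mulVec (xs (φ m)) + B.mulVec (u (φ m)) + w)
          atTop (𝓝 (A.mulVec y + B.mulVec v + w)) := by
        exact (((cA.tendsto y).comp (hy.comp hφ.tendsto_atTop)).add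
          ((cB.tendsto v).comp htend)).add tendsto_const_nhds
      exact ih.mem_of_tendsto tendtot (Eventually.of_forall fun m => h2 (φ m) w hw)
  -- the admissible control sets
  set V : ℕ → Set (Fin p → ℝ) :=
    fun k => {u ∈ 𝒰 | ∀ w ∈ 𝒲, A.mulVec x + B.mulVec u + w ∈ S k} with hV
  have hVsub : ∀ k, V k ⊆ 𝒰 := fun k => sep_subset _ _
  have hVne : ∀ k, (V k).Nonempty := by
    intro k
    have := hx (k + 1)
    rw [hSk] at this
    obtain ⟨u, hu, h2⟩ := this.2
    exact ⟨u, hu, h2⟩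
  have hVcl : ∀ k, IsClosed (V k) := by
    intro k
    have : V k = 𝒰 ∩ ⋂ w ∈ 𝒲, (fun u => A.mulVec x + B.mulVec u + w) ⁻¹' S k := by
      ext u
      simp [hV, mem_iInter]
    rw [this]
    exact h𝒰.isClosed.inter (isClosed_biInter fun w _ =>
      (hclosed k).preimage (by continuity))
  have hVdec : ∀ k, V (k + 1) ⊆ V k := by
    intro k u hu
    exact ⟨hu.1, fun w hw => hmono k (hu.2 w hw)⟩
  have hVcomp : IsCompact (V 0) := h𝒰.of_isClosed_subset (hVcl 0) (hVsub 0)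
  obtain ⟨u, hu⟩ := IsCompact.nonempty_iInter_of_sequence_nonempty_isCompact_isClosed
    V hVdec hVne hVcomp hVcl
  simp only [mem_iInter] at hu
  exact ⟨u, (hu 0).1, fun w hw => mem_iInter.mpr fun k => (hu k).2 w hw⟩
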